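/- Let C > 0, R > 0 and T0 ≥ 0. Suppose v1, v2 : ℝ → ℝ are differentiable and satisfy C·v1'(t) = -(v1(t) - v2(t))/R and C·v2'(t) = (v1(t) - v2(t))/R for all t. Then the energy sent by the first capacitor, ΔE_send := (C/2)·(v1(0)² - v1(T0)²), equals (1/8)·C·(v1(0) - v2(0))·(1 - exp(-2·T0/(C·R)))·((3·v1(0) + v2(0)) + (v1(0) - v2(0))·exp(-2·T0/(C·R))). -/

import Mathlib

theorem router_router_energy_sent
    (C R T0 : ℝ) (hC : 0 < C) (hR : 0 < R) (hT0 : 0 ≤ T0)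
    (v1 v2 : ℝ → ℝ) (hd1 : Differentiable ℝ v1) (hd2 : Differentiable ℝ v2)
    (h1 : ∀ t, C * deriv v1 t = -(v1 t - v2 t) / R)
    (h2 : ∀ t, C * deriv v2 t = (v1 t - v2 t) / R) :
    (C / 2) * ((v1 0)^2 - (v1 T0)^2) =
      (1/8) * C * (v1 0 - v2 0) * (1 - Real.exp (-2 * T0 / (C * R))) *
        ((3 * v1 0 + v2 0) + (v1 0 - v2 0) * Real.exp (-2 * T0 / (C * R))) := by
  have hC' : C ≠ 0 := hC.ne'
  have hR' : R ≠ 0 := hR.ne'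
  set k : ℝ := 2 / (C * R) with hk
  -- sum is constant
  have hsum : v1 T0 + v2 T0 = v1 0 + v2 0 := by
    have hder : ∀ t, deriv (fun t => v1 t + v2 t) t = 0 := by
      intro t
      rw [deriv_fun_add (hd1 t) (hd2 t)]
      have hz : C * (deriv v1 t + deriv v2 t) = 0 := by
        rw [mul_add, h1 t, h2 t]; ring
      rcases mul_eq_zero.mp hz with h | h
      · exact absurd h hC'
      · exact h
    exact is_const_of_deriv_eq_zero (hd1.add hd2) hder T0 0
  -- (v1 - v2) * exp (k t) is constant
  have hg : ∀ t, HasDerivAt (fun t => (v1 t - v2 t) * Real.exp (k * t)) 0 t := by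
    intro t
    have hde : HasDerivAt (fun t => Real.exp (k * t)) (Real.exp (k * t) * k) t := by
      have hlin : HasDerivAt (fun x : ℝ => k * x) k t := by
        simpa using (hasDerivAt_id t).const_mul k
      exact (Real.hasDerivAt_exp (k * t)).comp t hlin
    have h12 : HasDerivAt (fun t => v1 t - v2 t) (deriv v1 t - deriv v2 t) t :=
      ((hd1 t).hasDerivAt).sub ((hd2 t).hasDerivAt)
    have hmul := h12.mul hde
    have hv : deriv v1 t - deriv v2 t = -k * (v1 t - v2 t) := by
      have e1 := h1 t
      have e2 := h2 t
      have hCR : C * R ≠ 0 := mul_ne_zero hC' hR'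
      field_simp [hk] at e1 e2 ⊢
      rw [hk]
      have hd1' : deriv v1 t = -(v1 t - v2 t) / (C * R) := by
        rw [eq_div_iff hCR]; linear_combination e1
      have hd2' : deriv v2 t = (v1 t - v2 t) / (C * R) := by
        rw [eq_div_iff hCR]; linear_combination e2
      rw [hd1', hd2']; field_simp; ring
    have : (deriv v1 t - deriv v2 t) * Real.exp (k * t)
        + (v1 t - v2 t) * (Real.exp (k * t) * k) = 0 := by
      rw [hv]; ring
    rw [this] at hmul
    exact hmul
  have hgd : Differentiable ℝ (fun t => (v1 t - v2 t) * Real.exp (k * t)) :=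
    fun t => (hg t).differentiableAt
  have hgder : ∀ t, deriv (fun t => (v1 t - v2 t) * Real.exp (k * t)) t = 0 :=
    fun t => (hg t).deriv
  have hgc := is_const_of_deriv_eq_zero hgd hgder T0 0
  simp only [mul_zero, Real.exp_zero, mul_one] at hgc
  -- exponent rewriting
  have hE : Real.exp (-2 * T0 / (C * R)) = Real.exp (-(k * T0)) := by
    congr 1
    rw [hk]; ring
  set E : ℝ := Real.exp (-2 * T0 / (C * R)) with hEdef
  have hEexp : Real.exp (k * T0) * E = 1 := by
    rw [hE, ← Real.exp_add]; simp
  have hdiff : v1 T0 - v2 T0 = (v1 0 - v2 0) * E := by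
    have := congrArg (· * E) hgc
    calc v1 T0 - v2 T0 = (v1 T0 - v2 T0) * (Real.exp (k * T0) * E) := by
          rw [hEexp]; ring
      _ = (v1 0 - v2 0) * E := by rw [← mul_assoc, hgc]
  have hv1T : v1 T0 = ((v1 0 + v2 0) + (v1 0 - v2 0) * E) / 2 := by linarith
  rw [hv1T]; ring
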